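/- Let d = p₁^{α₁} ⋯ p_k^{α_k} be the prime factorization of d, and suppose for each i there exist m_i + 1 mutually unbiased bases of ℂ^{p_i^{α_i}} where m_i = p_i^{α_i}. Then ℂ^d admits at least min_i (p_i^{α_i} + 1) mutually unbiased bases, obtained as tensor products of bases with matching indices. -/

import Mathlib

open Matrix BigOperators

lemma sqrt_prod_aux {ι : Type*} (s : Finset ι) (f : ι → ℝ) (h : ∀ i ∈ s, 0 ≤ f i) :
    ∏ i ∈ s, Real.sqrt (f i) = Real.sqrt (∏ i ∈ s, f i) := by
  classical
  induction s using Finset.induction with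
  | empty => simp
  | insert x t hx ih =>
    rw [Finset.prod_insert hx, Finset.prod_insert hx,
      Real.sqrt_mul (h x (Finset.mem_insert_self _ _)),
      ih fun i hi => h i (Finset.mem_insert_of_mem hi)]

theorem mub_tensor_lower_bound
    {ι : Type*} [Fintype ι] [DecidableEq ι] [Nonempty ι] (n : ι → ℕ)
    (ψ : ∀ i, Fin (n i + 1) → Fin (n i) → (Fin (n i) → ℂ))
    (hMUB : ∀ i a b a' b', ‖star (ψ i a b) ⬝ᵥ ψ i a' b'‖ =
      if a = a' ∧ b = b' then 1 else if a = a' then 0 else 1 / Real.sqrt (n i)) :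
    ∀ (j j' : Fin (Finset.univ.inf' Finset.univ_nonempty (fun i => n i + 1)))
      (l l' : ∀ i, Fin (n i)),
      ‖(∑ x : ∀ i, Fin (n i),
          (starRingEnd ℂ
            (∏ i, ψ i (Fin.castLE (Finset.inf'_le _ (Finset.mem_univ i)) j) (l i) (x i))) *
          ∏ i, ψ i (Fin.castLE (Finset.inf'_le _ (Finset.mem_univ i)) j') (l' i) (x i))‖
      = if j = j' ∧ l = l' then 1 else if j = j' then 0
        else 1 / Real.sqrt (∏ i, (n i : ℝ)) := by
  intro j j' l l'
  set a := fun i => Fin.castLE (Finset.inf'_le _ (Finset.mem_univ i)) j with ha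
  set a' := fun i => Fin.castLE (Finset.inf'_le _ (Finset.mem_univ i)) j' with ha'
  have key : (∑ x : ∀ i, Fin (n i),
      (starRingEnd ℂ (∏ i, ψ i (a i) (l i) (x i))) * ∏ i, ψ i (a' i) (l' i) (x i))
      = ∏ i, (star (ψ i (a i) (l i)) ⬝ᵥ ψ i (a' i) (l' i)) := by
    have : ∀ x : ∀ i, Fin (n i),
        (starRingEnd ℂ (∏ i, ψ i (a i) (l i) (x i))) * ∏ i, ψ i (a' i) (l' i) (x i)
        = ∏ i, (starRingEnd ℂ (ψ i (a i) (l i) (x i)) * ψ i (a' i) (l' i) (x i)) := by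
      intro x
      rw [map_prod, ← Finset.prod_mul_distrib]
    simp_rw [this]
    simp only [dotProduct, Pi.star_apply, RCLike.star_def]
    rw [Finset.prod_univ_sum, Fintype.piFinset_univ]
  rw [key, norm_prod]
  have hinj : ∀ i : ι, (a i = a' i) ↔ j = j' := by
    intro i
    constructor
    · intro h
      exact Fin.castLE_injective _ h
    · intro h; simp only [ha, ha', h]
  by_cases hj : j = j'
  · subst hj
    by_cases hl : l = l'
    · subst hl
      simp only [if_pos (And.intro rfl rfl)]
      refine Finset.prod_eq_one fun i _ => ?_
      rw [hMUB]; simp [hinj]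
    · rw [if_neg (by simp [hl]), if_pos rfl]
      obtain ⟨i, hi⟩ := Function.ne_iff.mp hl
      refine Finset.prod_eq_zero (Finset.mem_univ i) ?_
      rw [hMUB]; simp [hi, hinj]
  · rw [if_neg (by simp [hj]), if_neg hj]
    have : ∀ i : ι, ‖star (ψ i (a i) (l i)) ⬝ᵥ ψ i (a' i) (l' i)‖
        = 1 / Real.sqrt (n i) := by
      intro i
      rw [hMUB]
      have hne : a i ≠ a' i := fun h => hj ((hinj i).mp h)
      simp [hne]
    simp_rw [this]
    rw [Finset.prod_div_distrib, Finset.prod_const_one, sqrt_prod_aux Finset.univ _ (fun i _ => Nat.cast_nonneg _)]
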